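/- Let W and W̃ be symmetric N×N real matrices with nonnegative entries, with row sums d_i = ∑_j W_{ij} and d̃_i = ∑_j W̃_{ij} satisfying min_i d_i ≥ m and min_i d̃_i ≥ m for some m > 0. Define the normalized Laplacians L(W) = I − D^{−1/2} W D^{−1/2} with D = diag(d_1,…,d_N), and similarly L(W̃) with D̃ = diag(d̃_1,…,d̃_N). Then, in the ℓ²→ℓ² operator norm, ‖L(W) − L(W̃)‖ ≤ (1/m)·‖W − W̃‖ + (max_i |d_i − d̃_i| / m²)·(‖W‖ + ‖W̃‖). -/

import Mathlib

open scoped Matrix.Norms.L2Operator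

namespace LapPerturb

/-- Row sums (weighted degrees) of a matrix. -/
noncomputable def rowSum {N : ℕ} (W : Matrix (Fin N) (Fin N) ℝ) (i : Fin N) : ℝ := ∑ j, W i j

/-- Normalized Laplacian `L(W) = I − D^{−1/2} W D^{−1/2}`. -/
noncomputable def normLap {N : ℕ} (W : Matrix (Fin N) (Fin N) ℝ) : Matrix (Fin N) (Fin N) ℝ :=
  1 - Matrix.diagonal (fun i => (Real.sqrt (rowSum W i))⁻¹) * W *
      Matrix.diagonal (fun i => (Real.sqrt (rowSum W i))⁻¹)

lemma mul3_le {a b c a' c' : ℝ} (ha : a ≤ a') (hc : c ≤ c') (hb : 0 ≤ b)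
    (ha0 : 0 ≤ a) (hc0 : 0 ≤ c) (hab' : 0 ≤ a' * b) : a * b * c ≤ a' * b * c' :=
  mul_le_mul (mul_le_mul_of_nonneg_right ha hb) hc hc0 hab'

lemma diag_norm_le {N : ℕ} (v : Fin N → ℝ) (c : ℝ) (hc : 0 ≤ c) (h : ∀ i, |v i| ≤ c) :
    ‖(Matrix.diagonal v : Matrix (Fin N) (Fin N) ℝ)‖ ≤ c := by
  rw [Matrix.l2_opNorm_def]
  apply ContinuousLinearMap.opNorm_le_bound _ hc
  intro x
  simp only [LinearEquiv.trans_apply, LinearMap.coe_toContinuousLinearMap',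
    Matrix.toEuclideanLin_apply]
  have hnorm : ∀ (y : EuclideanSpace ℝ (Fin N)),
      ‖y‖ = Real.sqrt (∑ i, (y i)^2) := by
    intro y; rw [EuclideanSpace.norm_eq]
    congr 1; refine Finset.sum_congr rfl fun i _ => ?_
    rw [Real.norm_eq_abs, sq_abs]
  rw [hnorm, hnorm]
  rw [← Real.sqrt_sq hc, ← Real.sqrt_mul (sq_nonneg c)]
  apply Real.sqrt_le_sqrt
  rw [Finset.mul_sum]
  apply Finset.sum_le_sum
  intro i _
  simp only [WithLp.ofLp_toLp,
    Matrix.mulVec_diagonal, mul_pow]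
  have h2 : (v i)^2 ≤ c^2 := by
    have := h i; nlinarith [abs_nonneg (v i), sq_abs (v i)]
  nlinarith [sq_nonneg (x i)]

/-- Scalar estimate: `|a^{-1/2} − b^{-1/2}| ≤ |a − b| / (2 m √m)` for `a, b ≥ m > 0`. -/
lemma inv_sqrt_diff_le {m a b : ℝ} (hm : 0 < m) (ha : m ≤ a) (hb : m ≤ b) :
    |(Real.sqrt a)⁻¹ - (Real.sqrt b)⁻¹| ≤ |a - b| / (2 * m * Real.sqrt m) := by
  have hsm : 0 < Real.sqrt m := Real.sqrt_pos.mpr hm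
  have hsa : Real.sqrt m ≤ Real.sqrt a := Real.sqrt_le_sqrt ha
  have hsb : Real.sqrt m ≤ Real.sqrt b := Real.sqrt_le_sqrt hb
  have hsa0 : 0 < Real.sqrt a := lt_of_lt_of_le hsm hsa
  have hsb0 : 0 < Real.sqrt b := lt_of_lt_of_le hsm hsb
  have ha2 : Real.sqrt a ^ 2 = a := Real.sq_sqrt (le_trans hm.le ha)
  have hb2 : Real.sqrt b ^ 2 = b := Real.sq_sqrt (le_trans hm.le hb)
  have hm2 : Real.sqrt m ^ 2 = m := Real.sq_sqrt hm.le
  set sa := Real.sqrt a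
  set sb := Real.sqrt b
  set sm := Real.sqrt m
  have hmm : sm * sm ≤ sa * sb := mul_le_mul hsa hsb hsm.le hsa0.le
  rcases le_total a b with hab | hab
  · have hsab : sa ≤ sb := Real.sqrt_le_sqrt hab
    rw [abs_of_nonneg (sub_nonneg.mpr (inv_anti₀ hsa0 hsab)),
      abs_of_nonpos (by linarith)]
    have key : sa⁻¹ - sb⁻¹ = (sb - sa) / (sa * sb) := by field_simp
    rw [key, ← ha2, ← hb2, ← hm2, div_le_div_iff₀ (by positivity) (by positivity)]
    have h1 : (2*sm)*(sm*sm) ≤ (sa+sb)*(sa*sb) :=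
      mul_le_mul (by linarith) hmm (by positivity) (by positivity)
    have h2 : (sb-sa)*((2*sm)*(sm*sm)) ≤ (sb-sa)*((sa+sb)*(sa*sb)) :=
      mul_le_mul_of_nonneg_left h1 (by linarith)
    nlinarith [h2]
  · have hsab : sb ≤ sa := Real.sqrt_le_sqrt hab
    rw [abs_of_nonpos (sub_nonpos.mpr (inv_anti₀ hsb0 hsab)),
      abs_of_nonneg (by linarith)]
    have key : -(sa⁻¹ - sb⁻¹) = (sa - sb) / (sa * sb) := by field_simp; ring
    rw [key, ← ha2, ← hb2, ← hm2, div_le_div_iff₀ (by positivity) (by positivity)]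
    have h1 : (2*sm)*(sm*sm) ≤ (sa+sb)*(sa*sb) :=
      mul_le_mul (by linarith) hmm (by positivity) (by positivity)
    have h2 : (sa-sb)*((2*sm)*(sm*sm)) ≤ (sa-sb)*((sa+sb)*(sa*sb)) :=
      mul_le_mul_of_nonneg_left h1 (by linarith)
    nlinarith [h2]

/-- Normalized Laplacian perturbation for bounded degrees.
For symmetric nonnegative matrices `W, W̃` with all row sums at least `m > 0`,
`‖L(W) − L(W̃)‖ ≤ ‖W − W̃‖/m + (max_i |d_i − d̃_i|/m²)·(‖W‖ + ‖W̃‖)` in the `ℓ²→ℓ²` operator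
norm. -/
theorem normalized_laplacian_perturbation
    (N : ℕ) (hN : 1 ≤ N) (W W' : Matrix (Fin N) (Fin N) ℝ)
    (hWsym : W.IsSymm) (hW'sym : W'.IsSymm)
    (hWnn : ∀ i j, 0 ≤ W i j) (hW'nn : ∀ i j, 0 ≤ W' i j)
    (m : ℝ) (hm : 0 < m)
    (hd : ∀ i, m ≤ rowSum W i) (hd' : ∀ i, m ≤ rowSum W' i) :
    ‖normLap W - normLap W'‖
      ≤ (1 / m) * ‖W - W'‖
        + (Finset.univ.sup' (Finset.univ_nonempty_iff.mpr (Fin.pos_iff_nonempty.mp hN))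
            (fun i => |rowSum W i - rowSum W' i|) / m ^ 2) * (‖W‖ + ‖W'‖) := by
  have hne : (Finset.univ : Finset (Fin N)).Nonempty :=
    Finset.univ_nonempty_iff.mpr (Fin.pos_iff_nonempty.mp hN)
  set δ := Finset.univ.sup' hne (fun i => |rowSum W i - rowSum W' i|) with hδ
  set S := (Matrix.diagonal (fun i => (Real.sqrt (rowSum W i))⁻¹) :
    Matrix (Fin N) (Fin N) ℝ) with hS
  set S' := (Matrix.diagonal (fun i => (Real.sqrt (rowSum W' i))⁻¹) :
    Matrix (Fin N) (Fin N) ℝ) with hS'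
  have hsm : 0 < Real.sqrt m := Real.sqrt_pos.mpr hm
  -- norm bounds on the diagonal matrices
  have hSn : ‖S‖ ≤ (Real.sqrt m)⁻¹ := by
    apply diag_norm_le _ _ (by positivity)
    intro i
    have h1 : 0 < Real.sqrt (rowSum W i) := Real.sqrt_pos.mpr (lt_of_lt_of_le hm (hd i))
    rw [abs_of_nonneg (by positivity)]
    exact inv_anti₀ hsm (Real.sqrt_le_sqrt (hd i))
  have hS'n : ‖S'‖ ≤ (Real.sqrt m)⁻¹ := by
    apply diag_norm_le _ _ (by positivity)
    intro i
    have h1 : 0 < Real.sqrt (rowSum W' i) := Real.sqrt_pos.mpr (lt_of_lt_of_le hm (hd' i))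
    rw [abs_of_nonneg (by positivity)]
    exact inv_anti₀ hsm (Real.sqrt_le_sqrt (hd' i))
  have hδ0 : 0 ≤ δ := by
    obtain ⟨i⟩ := Fin.pos_iff_nonempty.mp hN
    exact le_trans (abs_nonneg (rowSum W i - rowSum W' i))
      (Finset.le_sup' (fun i => |rowSum W i - rowSum W' i|) (Finset.mem_univ i))
  have hΔn : ‖S - S'‖ ≤ δ / (2 * m * Real.sqrt m) := by
    have hdiag : S - S' = Matrix.diagonal
        (fun i => (Real.sqrt (rowSum W i))⁻¹ - (Real.sqrt (rowSum W' i))⁻¹) := by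
      rw [hS, hS', Matrix.diagonal_sub]
    rw [hdiag]
    apply diag_norm_le _ _ (by positivity)
    intro i
    calc |(Real.sqrt (rowSum W i))⁻¹ - (Real.sqrt (rowSum W' i))⁻¹|
        ≤ |rowSum W i - rowSum W' i| / (2 * m * Real.sqrt m) :=
          inv_sqrt_diff_le hm (hd i) (hd' i)
      _ ≤ δ / (2 * m * Real.sqrt m) := by
          gcongr
          exact Finset.le_sup' (fun i => |rowSum W i - rowSum W' i|) (Finset.mem_univ i)
  -- algebraic decomposition
  have hkey : normLap W - normLap W' = -(S * W * S - S' * W' * S') := by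
    simp only [normLap, hS, hS']
    abel
  have hdecomp : S * W * S - S' * W' * S'
      = S * (W - W') * S + ((S - S') * W' * S + S' * W' * (S - S')) := by
    noncomm_ring
  have tri : ∀ A B C : Matrix (Fin N) (Fin N) ℝ, ‖A * B * C‖ ≤ ‖A‖ * ‖B‖ * ‖C‖ :=
    fun A B C => le_trans (Matrix.l2_opNorm_mul _ _)
      (mul_le_mul_of_nonneg_right (Matrix.l2_opNorm_mul _ _) (norm_nonneg _))
  have hmain : ‖normLap W - normLap W'‖
      ≤ (Real.sqrt m)⁻¹ * ‖W - W'‖ * (Real.sqrt m)⁻¹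
        + ((δ / (2 * m * Real.sqrt m)) * ‖W'‖ * (Real.sqrt m)⁻¹
          + (Real.sqrt m)⁻¹ * ‖W'‖ * (δ / (2 * m * Real.sqrt m))) := by
    rw [hkey, norm_neg, hdecomp]
    refine le_trans (norm_add_le _ _) ?_
    refine add_le_add ?_ (le_trans (norm_add_le _ _) (add_le_add ?_ ?_))
    · exact le_trans (tri _ _ _) (mul3_le hSn hSn (norm_nonneg _) (norm_nonneg _)
        (norm_nonneg _) (by positivity))
    · exact le_trans (tri _ _ _) (mul3_le hΔn hSn (norm_nonneg _) (norm_nonneg _)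
        (norm_nonneg _) (by positivity))
    · exact le_trans (tri _ _ _) (mul3_le hS'n hΔn (norm_nonneg _) (norm_nonneg _)
        (norm_nonneg _) (by positivity))
  refine le_trans hmain ?_
  -- final arithmetic
  have hmeq : m = Real.sqrt m * Real.sqrt m := (Real.mul_self_sqrt hm.le).symm
  set sm := Real.sqrt m with hsmdef
  rw [hmeq]
  have hsm' : sm ≠ 0 := hsm.ne'
  have hE : 0 ≤ ‖W - W'‖ := norm_nonneg _
  have hW0 : 0 ≤ ‖W‖ := norm_nonneg _
  have hW'0 : 0 ≤ ‖W'‖ := norm_nonneg _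
  have hterm : 0 ≤ δ * ‖W‖ := mul_nonneg hδ0 hW0
  have gen1 : ∀ x s : ℝ, s ≠ 0 → s⁻¹ * x * s⁻¹ = 1 / (s * s) * x := by
    intro x s hs; field_simp
  have gen2 : ∀ x s : ℝ, s ≠ 0 → δ / (2 * (s * s) * s) * x * s⁻¹
      + s⁻¹ * x * (δ / (2 * (s * s) * s)) = δ / (s * s) ^ 2 * x := by
    intro x s hs; field_simp; ring
  rw [gen1 ‖W - W'‖ sm hsm', gen2 ‖W'‖ sm hsm']
  have : δ / (sm * sm) ^ 2 * ‖W'‖ ≤ δ / (sm * sm) ^ 2 * (‖W‖ + ‖W'‖) := by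
    apply mul_le_mul_of_nonneg_left (by linarith) (by positivity)
  linarith

end LapPerturb
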